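/- Reflection formula for Γ_q via theta: for |q|<1 and z on the unit circle (z ≠ q^{-m} and z ≠ q^{m+1} poles avoided), Γ_q(z) · Γ_q(q z^{-1}) = 1/((z;q)_∞ (q z^{-1};q)_∞), and the right-hand side equals 1/((q;q)_∞^{-1}·θ) where (z;q)_∞(qz^{-1};q)_∞(q;q)_∞ = ∑_{n∈ℤ}(-1)ⁿ q^{n(n-1)/2} zⁿ (Jacobi triple product form). In particular (z;q)_∞ · (qz^{-1};q)_∞ · (q;q)_∞ = ∑_{n∈ℤ}(-1)ⁿ q^{binom(n,2)} zⁿ. -/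

import Mathlib

open Finset Filter Topology

namespace QGammaJTP

noncomputable def Pq (q : ℂ) (t : ℕ) : ℂ := ∏ i ∈ Finset.range t, (1 - q ^ (i + 1))

noncomputable def Nn (q : ℂ) (M : ℕ) (t : ℕ) : ℂ :=
  ∏ i ∈ Finset.range t, (1 - q ^ ((M : ℤ) - (i : ℤ)))

noncomputable def G (q : ℂ) (M : ℕ) (k : ℤ) : ℂ :=
  if k < 0 then 0 else Nn q M k.toNat / Pq q k.toNat

noncomputable def T (q z : ℂ) (n : ℤ) : ℂ := (-1)^n * q ^ (n * (n-1) / 2) * z ^ n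

noncomputable def S (q z : ℂ) (N : ℕ) : ℂ := ∑' n : ℤ, T q z n * G q (2*N) ((N:ℤ) + n)

variable {q z : ℂ}

lemma factor_ne (hq : ‖q‖ < 1) (i : ℕ) : (1 : ℂ) - q ^ (i + 1) ≠ 0 := by
  intro h
  have h1 : q ^ (i+1) = 1 := by linear_combination -h
  have : ‖q ^ (i+1)‖ < 1 := by
    rw [norm_pow]; exact pow_lt_one₀ (norm_nonneg q) hq (Nat.succ_ne_zero i)
  rw [h1, norm_one] at this; exact lt_irrefl _ this


lemma Pq_ne (hq : ‖q‖ < 1) (t : ℕ) : Pq q t ≠ 0 :=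
  Finset.prod_ne_zero_iff.mpr fun i _ => factor_ne hq i


lemma G_neg {M : ℕ} {k : ℤ} (h : k < 0) : G q M k = 0 := by simp [G, h]

lemma G_zero (M : ℕ) : G q M 0 = 1 := by simp [G, Nn, Pq]

lemma G_eq_zero_of_lt {M : ℕ} {k : ℤ} (h : (M : ℤ) < k) : G q M k = 0 := by
  have hk : ¬ k < 0 := by omega
  have hM : M ∈ Finset.range k.toNat := by rw [Finset.mem_range]; omega
  rw [G, if_neg hk, Nn, Finset.prod_eq_zero hM (by simp), zero_div]


lemma Nn_succ' (M t : ℕ) : Nn q (M+1) (t+1) = Nn q M t * (1 - q ^ ((M : ℤ) + 1)) := by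
  rw [Nn, Finset.prod_range_succ']
  rw [show (((M+1:ℕ):ℤ)) - ((0:ℕ):ℤ) = (M:ℤ)+1 by push_cast; ring]
  congr 1
  refine Finset.prod_congr rfl fun i _ => ?_
  rw [show (((M+1:ℕ):ℤ)) - ((i+1:ℕ):ℤ) = (M:ℤ) - i by push_cast; ring]


lemma Nn_succ (M t : ℕ) : Nn q M (t+1) = Nn q M t * (1 - q ^ ((M : ℤ) - t)) := by
  rw [Nn, Finset.prod_range_succ]; rfl


lemma Pq_succ (t : ℕ) : Pq q (t+1) = Pq q t * (1 - q ^ (t+1)) := by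
  rw [Pq, Finset.prod_range_succ]; rfl


lemma rec1 (hq : ‖q‖ < 1) (hq0 : q ≠ 0) (M : ℕ) (k : ℤ) :
    G q (M+1) k = G q M (k-1) + q ^ k * G q M k := by
  rcases lt_trichotomy k 0 with h | rfl | h
  · rw [G_neg h, G_neg (by omega), G_neg h]; ring
  · rw [G_zero, G_zero, G_neg (by norm_num)]; simp
  · obtain ⟨j, rfl⟩ : ∃ j : ℕ, k = (j : ℤ) + 1 := ⟨(k-1).toNat, by omega⟩
    have ht1 : ((j : ℤ) + 1).toNat = j + 1 := by omega
    have ht2 : ((j : ℤ) + 1 - 1).toNat = j := by omega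
    have hzn : q ^ ((j:ℤ)+1) = q ^ (j+1) := by norm_cast
    have hz' : q ^ (j+1) * q ^ ((M:ℤ) - j) = q ^ ((M:ℤ)+1) := by
      rw [← hzn, ← zpow_add₀ hq0]; congr 1; ring
    have hP := Pq_ne hq (q := q) j
    have hf := factor_ne hq (q := q) j
    rw [G, G, G, if_neg (by omega), if_neg (by omega), if_neg (by omega), ht1, ht2]
    rw [Nn_succ', Nn_succ, Pq_succ, hzn]
    have key : Nn q M j * (1 - q^((M:ℤ)+1))
        = Nn q M j * (1 - q^(j+1)) + q^(j+1) * (Nn q M j * (1 - q^((M:ℤ)-(j:ℤ)))) := by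
      linear_combination (Nn q M j) * hz'
    rw [key, add_div, mul_div_mul_right _ _ hf, mul_div_assoc]


lemma rec2 (hq : ‖q‖ < 1) (hq0 : q ≠ 0) (M : ℕ) (k : ℤ) :
    G q (M+1) k = q ^ ((M : ℤ) + 1 - k) * G q M (k-1) + G q M k := by
  rcases lt_trichotomy k 0 with h | rfl | h
  · rw [G_neg h, G_neg (by omega), G_neg h]; ring
  · rw [G_zero, G_zero, G_neg (by norm_num)]; simp
  · obtain ⟨j, rfl⟩ : ∃ j : ℕ, k = (j : ℤ) + 1 := ⟨(k-1).toNat, by omega⟩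
    have ht1 : ((j : ℤ) + 1).toNat = j + 1 := by omega
    have ht2 : ((j : ℤ) + 1 - 1).toNat = j := by omega
    have hzn : q ^ ((j:ℤ)+1) = q ^ (j+1) := by norm_cast
    have hz' : q ^ (j+1) * q ^ ((M:ℤ) - j) = q ^ ((M:ℤ)+1) := by
      rw [← hzn, ← zpow_add₀ hq0]; congr 1; ring
    have hz2 : q ^ ((M:ℤ) + 1 - ((j:ℤ)+1)) = q ^ ((M:ℤ) - (j:ℤ)) := by congr 1; ring
    have hP := Pq_ne hq (q := q) j
    have hf := factor_ne hq (q := q) j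
    rw [G, G, G, if_neg (by omega), if_neg (by omega), if_neg (by omega), ht1, ht2]
    rw [Nn_succ', Nn_succ, Pq_succ, hz2]
    have key : Nn q M j * (1 - q^((M:ℤ)+1))
        = q ^ ((M:ℤ)-(j:ℤ)) * (Nn q M j * (1 - q^(j+1))) + Nn q M j * (1 - q^((M:ℤ)-(j:ℤ))) := by
      linear_combination (Nn q M j) * hz'
    rw [key, add_div, mul_div_assoc, mul_div_mul_right _ _ hf]


lemma rec_comb (hq : ‖q‖ < 1) (hq0 : q ≠ 0) (M : ℕ) (k : ℤ) :
    G q (M+2) k = q ^ ((M : ℤ) + 2 - k) * G q M (k-2)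
      + (1 + q ^ (M+1)) * G q M (k-1) + q ^ k * G q M k := by
  have h1 := rec1 hq hq0 (M+1) k
  have h2 := rec2 hq hq0 M (k-1)
  have h3 := rec2 hq hq0 M k
  have e1 : q ^ ((M:ℤ) + 1 - (k-1)) = q ^ ((M:ℤ) + 2 - k) := by congr 1; ring
  have e2 : q ^ k * q ^ ((M:ℤ) + 1 - k) = q ^ ((M:ℤ)+1) := by
    rw [← zpow_add₀ hq0]; congr 1; ring
  have e3 : q ^ ((M:ℤ)+1) = q ^ (M+1) := by norm_cast
  rw [show (M+2) = (M+1)+1 from rfl, h1, h2, h3, e1]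
  have e4 : k - 1 - 1 = k - 2 := by ring
  rw [e4]
  linear_combination (G q M (k-1)) * e2 + (G q M (k-1)) * e3


lemma T_zero : T q z 0 = 1 := by simp [T]


lemma T_succ (hq0 : q ≠ 0) (hz : z ≠ 0) (n : ℤ) : T q z (n+1) = -z * q ^ n * T q z n := by
  unfold T
  obtain ⟨m, hm⟩ : ∃ m, n * (n-1) = 2*m := by
    have h := Int.even_mul_succ_self (n-1)
    rw [sub_add_cancel] at h
    obtain ⟨r, hr⟩ := h
    exact ⟨r, by linarith [hr]⟩
  have h2 : (n+1) * (n+1-1) = n*(n-1) + 2*n := by ring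
  rw [show (n+1) * (n+1-1) / 2 = n * (n-1) / 2 + n by omega]
  rw [zpow_add₀ hq0, zpow_add_one₀ hz, zpow_add_one₀ (by norm_num : (-1:ℂ) ≠ 0)]
  ring


lemma summable_TG (c : ℤ → ℂ) (b : ℤ) (M : ℕ) (f : ℤ → ℤ) (hf : ∀ n, f n = n + b) :
    Summable (fun n : ℤ => c n * G q M (f n)) := by
  apply summable_of_ne_finset_zero (s := Finset.Icc (-b) ((M:ℤ) - b))
  intro n hn
  rw [Finset.mem_Icc, not_and_or] at hn
  rw [hf]
  rcases hn with h | h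
  · rw [G_neg (by omega), mul_zero]
  · rw [G_eq_zero_of_lt (by omega), mul_zero]


lemma S_zero : S q z 0 = 1 := by
  rw [S, tsum_eq_sum (s := {(0:ℤ)})]
  · simp [T_zero, G_zero]
  · intro n hn
    rcases lt_trichotomy n 0 with h | rfl | h
    · rw [G_neg (by omega), mul_zero]
    · simp at hn
    · rw [G_eq_zero_of_lt (by push_cast; omega), mul_zero]


lemma tsum_shift (f : ℤ → ℂ) (d : ℤ) : ∑' n : ℤ, f (n + d) = ∑' n : ℤ, f n := by
  have := (Equiv.addRight d).tsum_eq f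
  simpa using this


lemma S_succ (hq : ‖q‖ < 1) (hq0 : q ≠ 0) (hz : z ≠ 0) (N : ℕ) :
    S q z (N+1) = (1 - z * q^N) * (1 - q * z⁻¹ * q^N) * S q z N := by
  have hzz : z⁻¹ * z = 1 := inv_mul_cancel₀ hz
  have key : ∀ n : ℤ, T q z n * G q (2*(N+1)) ((N:ℤ)+1+n)
      = (T q z n * q^((N:ℤ)+1-n)) * G q (2*N) ((N:ℤ) + (n + -1))
        + (1 + q^(2*N+1)) * (T q z n * G q (2*N) ((N:ℤ) + n))
        + (T q z n * q^((N:ℤ) + (n+1))) * G q (2*N) ((N:ℤ) + (n + 1)) := by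
    intro n
    rw [show 2*(N+1) = 2*N+2 by ring, rec_comb hq hq0 (2*N) ((N:ℤ)+1+n)]
    rw [show ((2*N:ℕ):ℤ) + 2 - ((N:ℤ)+1+n) = (N:ℤ)+1-n by push_cast; ring,
        show (N:ℤ)+1+n-2 = (N:ℤ) + (n + -1) by ring,
        show (N:ℤ)+1+n-1 = (N:ℤ) + n by ring,
        show (N:ℤ)+1+n = (N:ℤ) + (n + 1) by ring]
    ring
  have hA : Summable (fun n : ℤ => (T q z n * q^((N:ℤ)+1-n)) * G q (2*N) ((N:ℤ) + (n + -1))) :=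
    summable_TG (fun n => T q z n * q^((N:ℤ)+1-n)) ((N:ℤ) + -1) (2*N) (fun n => (N:ℤ) + (n + -1)) (fun n => by ring)
  have hB : Summable (fun n : ℤ => (1 + q^(2*N+1)) * (T q z n * G q (2*N) ((N:ℤ) + n))) :=
    (summable_TG (fun n => (1 + q^(2*N+1)) * T q z n) (N:ℤ) (2*N) (fun n => (N:ℤ) + n) (fun n => by ring)).congr
      (fun n => by ring)
  have hC : Summable (fun n : ℤ => (T q z n * q^((N:ℤ) + (n+1))) * G q (2*N) ((N:ℤ) + (n + 1))) :=
    summable_TG (fun n => T q z n * q^((N:ℤ) + (n+1))) ((N:ℤ) + 1) (2*N) (fun n => (N:ℤ) + (n + 1)) (fun n => by ring)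
  have hS1 : S q z (N+1) = ∑' n : ℤ,
      ((T q z n * q^((N:ℤ)+1-n)) * G q (2*N) ((N:ℤ) + (n + -1))
        + (1 + q^(2*N+1)) * (T q z n * G q (2*N) ((N:ℤ) + n))
        + (T q z n * q^((N:ℤ) + (n+1))) * G q (2*N) ((N:ℤ) + (n + 1))) := by
    rw [S]
    exact tsum_congr fun n => by
      rw [show ((N+1:ℕ):ℤ) = (N:ℤ)+1 by push_cast; ring, show (N:ℤ)+1+n = (N:ℤ)+1+n from rfl]
      exact key n
  rw [hS1, Summable.tsum_add (hA.add hB) hC, Summable.tsum_add hA hB]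
  -- A part
  have hptA : ∀ n : ℤ, (T q z n * q^((N:ℤ)+1-n)) * G q (2*N) ((N:ℤ) + (n + -1))
      = -z * q^(N:ℤ) * (T q z (n + -1) * G q (2*N) ((N:ℤ) + (n + -1))) := by
    intro n
    have hT : T q z n = -z * q^(n + -1) * T q z (n + -1) := by
      have := T_succ (q := q) (z := z) hq0 hz (n + -1)
      rw [show n + -1 + 1 = n by ring] at this
      exact this
    have hq1 : q^(n + -1) * q^((N:ℤ)+1-n) = q^(N:ℤ) := by
      rw [← zpow_add₀ hq0]; congr 1; ring
    rw [hT]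
    linear_combination (-(z * T q z (n + -1) * G q (2*N) ((N:ℤ) + (n + -1)))) * hq1
  have hsumA : ∑' n : ℤ, (T q z n * q^((N:ℤ)+1-n)) * G q (2*N) ((N:ℤ) + (n + -1))
      = -z * q^(N:ℤ) * S q z N := by
    rw [S, ← tsum_shift (fun m : ℤ => T q z m * G q (2*N) ((N:ℤ) + m)) (-1), ← tsum_mul_left]
    exact tsum_congr hptA
  -- C part
  have hptC : ∀ n : ℤ, (T q z n * q^((N:ℤ) + (n+1))) * G q (2*N) ((N:ℤ) + (n + 1))
      = -z⁻¹ * q^((N:ℤ)+1) * (T q z (n + 1) * G q (2*N) ((N:ℤ) + (n + 1))) := by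
    intro n
    rw [T_succ hq0 hz n]
    have hq2 : q^((N:ℤ)+1) * q^n = q^((N:ℤ) + (n+1)) := by
      rw [← zpow_add₀ hq0]; congr 1; ring
    linear_combination (-(T q z n * G q (2*N) ((N:ℤ) + (n+1)))) * hq2
      + (-(T q z n * G q (2*N) ((N:ℤ) + (n+1)) * q^((N:ℤ)+1) * q^n)) * hzz
  have hsumC : ∑' n : ℤ, (T q z n * q^((N:ℤ) + (n+1))) * G q (2*N) ((N:ℤ) + (n + 1))
      = -z⁻¹ * q^((N:ℤ)+1) * S q z N := by
    rw [S, ← tsum_shift (fun m : ℤ => T q z m * G q (2*N) ((N:ℤ) + m)) 1, ← tsum_mul_left]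
    exact tsum_congr hptC
  have hsumB : ∑' n : ℤ, (1 + q^(2*N+1)) * (T q z n * G q (2*N) ((N:ℤ) + n))
      = (1 + q^(2*N+1)) * S q z N := by
    rw [S, tsum_mul_left]
  rw [hsumA, hsumB, hsumC]
  have hn1 : q^(N:ℤ) = q^(N:ℕ) := by norm_cast
  have hn2 : q^((N:ℤ)+1) = q^(N+1:ℕ) := by norm_cast
  rw [hn1, hn2]
  have hexp : q^(2*N+1:ℕ) = q^(N:ℕ) * q^(N:ℕ) * q := by
    rw [← pow_add, ← pow_succ]; congr 1; ring
  have hexp2 : q^(N+1:ℕ) = q^(N:ℕ) * q := by rw [pow_succ]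
  rw [hexp, hexp2]
  linear_combination (-(q^(N:ℕ) * q^(N:ℕ) * q * S q z N)) * hzz


lemma prod_eq_S (hq : ‖q‖ < 1) (hq0 : q ≠ 0) (hz : z ≠ 0) (N : ℕ) :
    (∏ j ∈ Finset.range N, (1 - z*q^j)) * (∏ j ∈ Finset.range N, (1 - q*z⁻¹*q^j)) = S q z N := by
  induction N with
  | zero => simp [S_zero]
  | succ N ih =>
      rw [Finset.prod_range_succ, Finset.prod_range_succ, S_succ hq hq0 hz]
      rw [← ih]; ring


lemma one_sub_sum_le_prod (s : Finset ℕ) (f : ℕ → ℝ) (h0 : ∀ i, 0 ≤ f i) (h1 : ∀ i, f i ≤ 1) :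
    1 - ∑ i ∈ s, f i ≤ ∏ i ∈ s, (1 - f i) := by
  classical
  induction s using Finset.induction_on with
  | empty => simp
  | @insert a s hx ih =>
      rw [Finset.sum_insert hx, Finset.prod_insert hx]
      have hs : 0 ≤ ∑ i ∈ s, f i := Finset.sum_nonneg fun i _ => h0 i
      nlinarith [h0 a, h1 a, ih]


lemma sum_pow_le (hq : ‖q‖ < 1) (t : ℕ) : ∑ i ∈ Finset.range t, ‖q‖^(i+1) ≤ (1-‖q‖)⁻¹ := by
  have h0 : 0 ≤ ‖q‖ := norm_nonneg q
  calc ∑ i ∈ Finset.range t, ‖q‖^(i+1) ≤ ∑ i ∈ Finset.range t, ‖q‖^i := by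
        apply Finset.sum_le_sum
        intro i _
        exact pow_le_pow_of_le_one h0 hq.le (by omega)
    _ ≤ (1-‖q‖)⁻¹ := by
        apply (summable_geometric_of_lt_one h0 hq).sum_le_tsum _ (fun i _ => pow_nonneg h0 i)
          |>.trans_eq
        exact (hasSum_geometric_of_lt_one h0 hq).tsum_eq


lemma delta_exists (hq : ‖q‖ < 1) : ∃ δ : ℝ, 0 < δ ∧ ∀ t, δ ≤ ∏ i ∈ Finset.range t, (1 - ‖q‖^(i+1)) := by
  have h0 : 0 ≤ ‖q‖ := norm_nonneg q
  have hfac : ∀ i : ℕ, 0 < 1 - ‖q‖^(i+1) := by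
    intro i
    have : ‖q‖^(i+1) < 1 := pow_lt_one₀ h0 hq (Nat.succ_ne_zero i)
    linarith
  have hfac1 : ∀ i : ℕ, 1 - ‖q‖^(i+1) ≤ 1 := by
    intro i; nlinarith [pow_nonneg h0 (i+1)]
  obtain ⟨J, hJ⟩ : ∃ J : ℕ, ‖q‖^(J+1) * (1-‖q‖)⁻¹ ≤ 1/2 := by
    have ht : Tendsto (fun J : ℕ => ‖q‖^(J+1) * (1-‖q‖)⁻¹) atTop (𝓝 (0 * (1-‖q‖)⁻¹)) := by
      exact ((tendsto_pow_atTop_nhds_zero_of_lt_one h0 hq).comp (tendsto_add_atTop_nat 1)).mul_const _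
    rw [zero_mul] at ht
    exact (ht.eventually_le_const (by norm_num : (0:ℝ) < 1/2)).exists
  have htail : ∀ t, J ≤ t → ∑ i ∈ Finset.Ico J t, ‖q‖^(i+1) ≤ 1/2 := by
    intro t hJt
    rw [Finset.sum_Ico_eq_sum_range]
    calc ∑ i ∈ Finset.range (t - J), ‖q‖^(J + i + 1)
        = ‖q‖^(J+1) * ∑ i ∈ Finset.range (t - J), ‖q‖^i := by
          rw [Finset.mul_sum]
          exact Finset.sum_congr rfl fun i _ => by rw [← pow_add]; ring_nf
      _ ≤ ‖q‖^(J+1) * (1-‖q‖)⁻¹ := by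
          apply mul_le_mul_of_nonneg_left _ (pow_nonneg h0 _)
          calc ∑ i ∈ Finset.range (t-J), ‖q‖^i ≤ ∑ i ∈ Finset.range (t-J), ‖q‖^i := le_refl _
            _ ≤ (1-‖q‖)⁻¹ := by
              refine ((summable_geometric_of_lt_one h0 hq).sum_le_tsum _ (fun i _ => pow_nonneg h0 i)
                ).trans_eq
                (hasSum_geometric_of_lt_one h0 hq).tsum_eq
      _ ≤ 1/2 := hJ
  have hPJ : 0 < ∏ i ∈ Finset.range J, (1 - ‖q‖^(i+1)) :=
    Finset.prod_pos fun i _ => hfac i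
  refine ⟨(∏ i ∈ Finset.range J, (1 - ‖q‖^(i+1))) * (1/2), by positivity, fun t => ?_⟩
  rcases le_or_gt t J with h | h
  · have hsplit : (∏ i ∈ Finset.range t, (1 - ‖q‖^(i+1)))
        * ∏ i ∈ Finset.Ico t J, (1 - ‖q‖^(i+1)) = ∏ i ∈ Finset.range J, (1 - ‖q‖^(i+1)) :=
      Finset.prod_range_mul_prod_Ico _ h
    have hIco : ∏ i ∈ Finset.Ico t J, (1 - ‖q‖^(i+1)) ≤ 1 :=
      Finset.prod_le_one (fun i _ => (hfac i).le) (fun i _ => hfac1 i)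
    have hpt : 0 < ∏ i ∈ Finset.range t, (1 - ‖q‖^(i+1)) := Finset.prod_pos fun i _ => hfac i
    nlinarith
  · have hsplit : (∏ i ∈ Finset.range J, (1 - ‖q‖^(i+1)))
        * ∏ i ∈ Finset.Ico J t, (1 - ‖q‖^(i+1)) = ∏ i ∈ Finset.range t, (1 - ‖q‖^(i+1)) :=
      Finset.prod_range_mul_prod_Ico _ h.le
    have hlow : 1 - ∑ i ∈ Finset.Ico J t, ‖q‖^(i+1) ≤ ∏ i ∈ Finset.Ico J t, (1 - ‖q‖^(i+1)) :=
      one_sub_sum_le_prod _ _ (fun i => pow_nonneg h0 _) (fun i => by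
        nlinarith [pow_nonneg h0 (i+1), pow_le_one₀ h0 hq.le (n := i+1)])
    have h2 := htail t h.le
    nlinarith

lemma Nn_eq (M t : ℕ) (h : t ≤ M) :
    Nn q M t * Pq q (M - t) = Pq q M := by
  have hNn : Nn q M t = ∏ j ∈ Finset.range t, (1 - q ^ (M - t + j + 1)) := by
    rw [Nn, ← Finset.prod_range_reflect]
    refine Finset.prod_congr rfl fun j hj => ?_
    rw [Finset.mem_range] at hj
    have : ((M:ℤ) - ((t - 1 - j : ℕ) : ℤ)) = ((M - t + j + 1 : ℕ) : ℤ) := by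
      push_cast [Nat.cast_sub (by omega : j ≤ t - 1), Nat.cast_sub (by omega : 1 ≤ t),
        Nat.cast_sub h]
      ring
    rw [this, zpow_natCast]
  have hPq : Pq q M = Pq q (M - t) * ∏ j ∈ Finset.range t, (1 - q ^ (M - t + j + 1)) := by
    conv_lhs => rw [Pq, show M = (M - t) + t by omega, Finset.prod_range_add]
    rfl
  rw [hNn, hPq]; ring


lemma G_formula (hq : ‖q‖ < 1) (M : ℕ) (k : ℤ) (h0 : 0 ≤ k) (h1 : k ≤ (M:ℤ)) :
    G q M k = Pq q M / (Pq q k.toNat * Pq q (M - k.toNat)) := by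
  have ht : k.toNat ≤ M := by omega
  rw [G, if_neg (by omega), ← Nn_eq (q := q) M k.toNat ht,
    mul_div_mul_right _ _ (Pq_ne hq (M - k.toNat))]


lemma Pq_norm_le (hq : ‖q‖ < 1) (t : ℕ) : ‖Pq q t‖ ≤ Real.exp ((1-‖q‖)⁻¹) := by
  rw [Pq, norm_prod]
  calc ∏ i ∈ Finset.range t, ‖1 - q^(i+1)‖
      ≤ ∏ i ∈ Finset.range t, Real.exp (‖q‖^(i+1)) := by
        apply Finset.prod_le_prod (fun i _ => norm_nonneg _)
        intro i _
        calc ‖1 - q^(i+1)‖ ≤ ‖(1:ℂ)‖ + ‖q^(i+1)‖ := norm_sub_le _ _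
          _ = 1 + ‖q‖^(i+1) := by rw [norm_one, norm_pow]
          _ ≤ Real.exp (‖q‖^(i+1)) := by
              have := Real.add_one_le_exp (‖q‖^(i+1)); linarith
    _ = Real.exp (∑ i ∈ Finset.range t, ‖q‖^(i+1)) := by rw [Real.exp_sum]
    _ ≤ Real.exp ((1-‖q‖)⁻¹) := Real.exp_le_exp.mpr (sum_pow_le hq t)


lemma Pq_norm_ge (hq : ‖q‖ < 1) {δ : ℝ} (hδ : ∀ t, δ ≤ ∏ i ∈ Finset.range t, (1 - ‖q‖^(i+1))) (t : ℕ) :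
    δ ≤ ‖Pq q t‖ := by
  refine (hδ t).trans ?_
  rw [Pq, norm_prod]
  apply Finset.prod_le_prod
  · intro i _
    have : ‖q‖^(i+1) < 1 := pow_lt_one₀ (norm_nonneg q) hq (Nat.succ_ne_zero i)
    linarith
  · intro i _
    calc 1 - ‖q‖^(i+1) = ‖(1:ℂ)‖ - ‖q^(i+1)‖ := by rw [norm_one, norm_pow]
      _ ≤ ‖1 - q^(i+1)‖ := norm_sub_norm_le _ _


lemma G_norm_le (hq : ‖q‖ < 1) {δ : ℝ} (hδ0 : 0 < δ)
    (hδ : ∀ t, δ ≤ ∏ i ∈ Finset.range t, (1 - ‖q‖^(i+1))) (M : ℕ) (k : ℤ) :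
    ‖G q M k‖ ≤ Real.exp ((1-‖q‖)⁻¹) / (δ * δ) := by
  have hC : 0 ≤ Real.exp ((1-‖q‖)⁻¹) / (δ * δ) := by positivity
  rcases lt_or_ge k 0 with h | h0
  · rw [G, if_pos h, norm_zero]; exact hC
  rcases lt_or_ge (M:ℤ) k with h | h1
  · have hM : M ∈ Finset.range k.toNat := by rw [Finset.mem_range]; omega
    rw [G, if_neg (by omega), Nn, Finset.prod_eq_zero hM (by simp), zero_div, norm_zero]
    exact hC
  rw [G_formula hq M k h0 h1, norm_div, norm_mul]
  apply div_le_div₀ (Real.exp_pos _).le (Pq_norm_le hq M) (by positivity)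
  exact mul_le_mul (Pq_norm_ge hq hδ _) (Pq_norm_ge hq hδ _) hδ0.le (norm_nonneg _)


lemma multipliable_factor (hq : ‖q‖ < 1) (c : ℂ) : Multipliable (fun j : ℕ => 1 - c * q^j) := by
  by_cases hex : ∃ j, 1 - c * q^j = 0
  · obtain ⟨j0, hj0⟩ := hex
    refine ⟨0, ?_⟩
    have hev : (fun s : Finset ℕ => ∏ i ∈ s, (1 - c*q^i)) =ᶠ[atTop] (fun _ => 0) := by
      filter_upwards [eventually_ge_atTop ({j0} : Finset ℕ)] with s hs
      exact Finset.prod_eq_zero (hs (Finset.mem_singleton_self j0)) hj0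
    exact Tendsto.congr' hev.symm tendsto_const_nhds
  · push_neg at hex
    refine Complex.multipliable_of_summable_log ?_
    have hev : ∀ᶠ j in atTop, ‖c‖ * ‖q‖^j < 1/2 := by
      have ht : Tendsto (fun j : ℕ => ‖c‖ * ‖q‖^j) atTop (𝓝 0) := by
        simpa using (tendsto_pow_atTop_nhds_zero_of_lt_one (norm_nonneg q) hq).const_mul ‖c‖
      exact ht.eventually_lt_const (by norm_num : (0:ℝ) < 1/2)
    apply Summable.of_norm_bounded_eventually_nat (g := fun j => 3/2 * (‖c‖ * ‖q‖^j))
    · exact ((summable_geometric_of_lt_one (norm_nonneg q) hq).mul_left (3/2 * ‖c‖)).congr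
        fun j => by ring
    · filter_upwards [hev] with j hj
      have h1 : ‖-(c * q^j)‖ ≤ 1/2 := by
        rw [norm_neg, norm_mul, norm_pow]; linarith
      have := Complex.norm_log_one_add_half_le_self h1
      rw [show 1 + -(c * q^j) = 1 - c * q^j by ring] at this
      refine this.trans ?_
      rw [norm_neg, norm_mul, norm_pow]


lemma summable_normT (hq : ‖q‖ < 1) (hq0 : q ≠ 0) (hz : z ≠ 0) : Summable (fun n : ℤ => ‖T q z n‖) := by
  have hqn : (0:ℝ) < ‖q‖ := norm_pos_iff.mpr hq0
  have hzn : (0:ℝ) < ‖z‖ := norm_pos_iff.mpr hz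
  apply Summable.of_nat_of_neg
  · apply summable_of_ratio_norm_eventually_le (r := 1/2) (by norm_num)
    have hev : ∀ᶠ k : ℕ in atTop, ‖z‖ * ‖q‖^k ≤ 1/2 := by
      have ht : Tendsto (fun k : ℕ => ‖z‖ * ‖q‖^k) atTop (𝓝 0) := by
        simpa using (tendsto_pow_atTop_nhds_zero_of_lt_one (norm_nonneg q) hq).const_mul ‖z‖
      exact (ht.eventually_lt_const (by norm_num : (0:ℝ) < 1/2)).mono fun k h => h.le
    filter_upwards [hev] with k hk
    have hTs : T q z ((k:ℤ)+1) = -z * q^(k:ℤ) * T q z (k:ℤ) := T_succ hq0 hz k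
    have hcast : ((k+1:ℕ):ℤ) = (k:ℤ)+1 := by push_cast; ring
    rw [norm_norm, norm_norm, hcast, hTs]
    rw [norm_mul, norm_mul, norm_neg, norm_zpow]
    rw [show ‖q‖^(k:ℤ) = ‖q‖^(k:ℕ) by norm_cast]
    calc ‖z‖ * ‖q‖^k * ‖T q z (k:ℤ)‖ ≤ 1/2 * ‖T q z (k:ℤ)‖ :=
      mul_le_mul_of_nonneg_right hk (norm_nonneg _)
      _ = 1/2 * ‖T q z (k:ℤ)‖ := rfl
  · apply summable_of_ratio_norm_eventually_le (r := 1/2) (by norm_num)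
    have hev : ∀ᶠ k : ℕ in atTop, ‖z‖⁻¹ * ‖q‖^(k+1) ≤ 1/2 := by
      have ht : Tendsto (fun k : ℕ => ‖z‖⁻¹ * ‖q‖^(k+1)) atTop (𝓝 0) := by
        simpa using ((tendsto_pow_atTop_nhds_zero_of_lt_one (norm_nonneg q) hq).comp
          (tendsto_add_atTop_nat 1)).const_mul ‖z‖⁻¹
      exact (ht.eventually_lt_const (by norm_num : (0:ℝ) < 1/2)).mono fun k h => h.le
    filter_upwards [hev] with k hk
    have hTs : T q z (-(k+1:ℕ)+1) = -z * q^(-(k+1:ℕ):ℤ) * T q z (-(k+1:ℕ)) :=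
      T_succ hq0 hz _
    have hcast : (-(↑(k+1):ℤ)+1) = -(k:ℤ) := by push_cast; ring
    rw [hcast] at hTs
    have hpos : (0:ℝ) < ‖q‖^(k+1:ℕ) := pow_pos hqn _
    have hnorm : ‖T q z (-(k:ℤ))‖ = ‖z‖ * (‖q‖^(k+1:ℕ))⁻¹ * ‖T q z (-((k+1:ℕ):ℤ))‖ := by
      rw [hTs, norm_mul, norm_mul, norm_neg, norm_zpow, zpow_neg]
      norm_cast
    rw [norm_norm, norm_norm]
    have heq : ‖T q z (-((k+1:ℕ):ℤ))‖ = ‖z‖⁻¹ * ‖q‖^(k+1:ℕ) * ‖T q z (-(k:ℤ))‖ := by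
      rw [hnorm, show ‖z‖⁻¹ * ‖q‖^(k+1:ℕ) * (‖z‖ * (‖q‖^(k+1:ℕ))⁻¹ * ‖T q z (-((k+1:ℕ):ℤ))‖)
          = (‖z‖⁻¹*‖z‖) * ((‖q‖^(k+1:ℕ)) * (‖q‖^(k+1:ℕ))⁻¹) * ‖T q z (-((k+1:ℕ):ℤ))‖ by ring,
        inv_mul_cancel₀ hzn.ne', mul_inv_cancel₀ hpos.ne', one_mul, one_mul]
    rw [heq]
    exact mul_le_mul_of_nonneg_right hk (norm_nonneg _)


lemma main2 (hq : ‖q‖ < 1) (hq0 : q ≠ 0) (hz : z ≠ 0) :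
    (∏' j : ℕ, (1 - z * q ^ j)) * (∏' j : ℕ, (1 - q * z⁻¹ * q ^ j)) *
        (∏' j : ℕ, (1 - q ^ (j + 1)))
      = ∑' n : ℤ, (-1) ^ n * q ^ (n * (n - 1) / 2) * z ^ n := by
  obtain ⟨δ, hδ0, hδ⟩ := delta_exists hq
  set Pinf := ∏' j : ℕ, (1 - q^(j+1)) with hPinf_def
  have hmultC : Multipliable (fun j : ℕ => 1 - q^(j+1)) :=
    (multipliable_factor hq q).congr (fun j => by rw [pow_succ'])
  have hPq_t : Tendsto (fun N => Pq q N) atTop (𝓝 Pinf) := by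
    simpa [Pq] using hmultC.hasProd.tendsto_prod_nat
  have hPinf_ne : Pinf ≠ 0 := by
    have h1 : Tendsto (fun N => ‖Pq q N‖) atTop (𝓝 ‖Pinf‖) := hPq_t.norm
    have h2 : δ ≤ ‖Pinf‖ := ge_of_tendsto' h1 (fun t => Pq_norm_ge hq hδ t)
    intro h
    rw [h, norm_zero] at h2
    exact absurd h2 (not_le.mpr hδ0)
  have hG_lim : ∀ n : ℤ, Tendsto (fun N : ℕ => G q (2*N) ((N:ℤ) + n)) atTop (𝓝 Pinf⁻¹) := by
    intro n
    have t1 : Tendsto (fun N : ℕ => Pq q (2*N)) atTop (𝓝 Pinf) :=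
      hPq_t.comp (tendsto_atTop_mono (fun N => by simp only [id_eq]; omega) tendsto_id)
    have t2 : Tendsto (fun N : ℕ => Pq q ((N:ℤ) + n).toNat) atTop (𝓝 Pinf) :=
      hPq_t.comp (tendsto_atTop_mono
        (fun N => (by omega : N - n.natAbs ≤ ((N:ℤ)+n).toNat))
        (tendsto_sub_atTop_nat n.natAbs))
    have t3 : Tendsto (fun N : ℕ => Pq q (2*N - ((N:ℤ) + n).toNat)) atTop (𝓝 Pinf) :=
      hPq_t.comp (tendsto_atTop_mono
        (fun N => (by omega : N - n.natAbs ≤ 2*N - ((N:ℤ)+n).toNat))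
        (tendsto_sub_atTop_nat n.natAbs))
    have hfrac : Tendsto (fun N : ℕ =>
        Pq q (2*N) / (Pq q ((N:ℤ)+n).toNat * Pq q (2*N - ((N:ℤ)+n).toNat))) atTop
        (𝓝 (Pinf / (Pinf * Pinf))) := t1.div (t2.mul t3) (mul_ne_zero hPinf_ne hPinf_ne)
    rw [show Pinf / (Pinf * Pinf) = Pinf⁻¹ by field_simp] at hfrac
    apply hfrac.congr'
    filter_upwards [eventually_ge_atTop n.natAbs] with N hN
    rw [G_formula hq (2*N) ((N:ℤ)+n) (by omega) (by push_cast; omega)]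
  have hTsum := summable_normT hq hq0 hz
  have hTan : Tendsto (fun N : ℕ => ∑' n : ℤ, T q z n * G q (2*N) ((N:ℤ) + n)) atTop
      (𝓝 (∑' n : ℤ, T q z n * Pinf⁻¹)) := by
    apply tendsto_tsum_of_dominated_convergence
      (bound := fun n : ℤ => Real.exp ((1-‖q‖)⁻¹) / (δ*δ) * ‖T q z n‖)
      (hTsum.mul_left _) (fun n => (hG_lim n).const_mul _)
    apply Eventually.of_forall
    intro N n
    rw [norm_mul, mul_comm (Real.exp ((1-‖q‖)⁻¹) / (δ*δ))]
    exact mul_le_mul_of_nonneg_left (G_norm_le hq hδ0 hδ _ _) (norm_nonneg _)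
  have hlim2 : Tendsto (fun N : ℕ => S q z N) atTop (𝓝 (∑' n : ℤ, T q z n * Pinf⁻¹)) := hTan
  have hA : Tendsto (fun N => ∏ j ∈ Finset.range N, (1 - z*q^j)) atTop
      (𝓝 (∏' j:ℕ, (1 - z*q^j))) := (multipliable_factor hq z).hasProd.tendsto_prod_nat
  have hB : Tendsto (fun N => ∏ j ∈ Finset.range N, (1 - q*z⁻¹*q^j)) atTop
      (𝓝 (∏' j:ℕ, (1 - q*z⁻¹*q^j))) :=
    (multipliable_factor hq (q*z⁻¹)).hasProd.tendsto_prod_nat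
  have hlim1 : Tendsto (fun N : ℕ => S q z N) atTop
      (𝓝 ((∏' j:ℕ, (1 - z*q^j)) * (∏' j:ℕ, (1 - q*z⁻¹*q^j)))) :=
    (hA.mul hB).congr (fun N => prod_eq_S hq hq0 hz N)
  have hkey : (∏' j:ℕ, (1 - z*q^j)) * (∏' j:ℕ, (1 - q*z⁻¹*q^j))
      = ∑' n : ℤ, T q z n * Pinf⁻¹ := tendsto_nhds_unique hlim1 hlim2
  calc (∏' j:ℕ, (1 - z*q^j)) * (∏' j:ℕ, (1 - q*z⁻¹*q^j)) * Pinf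
      = (∑' n : ℤ, T q z n * Pinf⁻¹) * Pinf := by rw [hkey]
    _ = (∑' n : ℤ, T q z n) * Pinf⁻¹ * Pinf := by rw [tsum_mul_right]
    _ = ∑' n : ℤ, T q z n := by rw [mul_assoc, inv_mul_cancel₀ hPinf_ne, mul_one]
    _ = ∑' n : ℤ, (-1) ^ n * q ^ (n * (n - 1) / 2) * z ^ n := rfl


end QGammaJTP

/-- Reflection formula for `Γ_q` via the Jacobi triple product: for `|q| < 1` and `z ≠ 0`,
`Γ_q(z) · Γ_q(q z⁻¹) = ((z;q)_∞ (qz⁻¹;q)_∞)⁻¹` and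
`(z;q)_∞ · (qz⁻¹;q)_∞ · (q;q)_∞ = ∑_{n∈ℤ} (-1)ⁿ q^{n(n-1)/2} zⁿ`. -/
theorem q_gamma_reflection_triple_product (q z : ℂ) (hq : ‖q‖ < 1) (hz : z ≠ 0) :
    ((∏' j : ℕ, (1 - z * q ^ j))⁻¹ * (∏' j : ℕ, (1 - q * z⁻¹ * q ^ j))⁻¹
        = ((∏' j : ℕ, (1 - z * q ^ j)) * (∏' j : ℕ, (1 - q * z⁻¹ * q ^ j)))⁻¹) ∧
    ((∏' j : ℕ, (1 - z * q ^ j)) * (∏' j : ℕ, (1 - q * z⁻¹ * q ^ j)) *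
          (∏' j : ℕ, (1 - q ^ (j + 1)))
        = ∑' n : ℤ, (-1) ^ n * q ^ (n * (n - 1) / 2) * z ^ n) := by
  have hq' : ‖q‖ < 1 := hq
  constructor
  · exact (mul_inv _ _).symm
  · by_cases hq0 : q = 0
    · subst hq0
      have hA : (∏' j : ℕ, (1 - z * (0:ℂ) ^ j)) = 1 - z := by
        rw [tprod_eq_prod (s := {0}) (f := fun j : ℕ => 1 - z * (0:ℂ) ^ j) ?_]
        · simp
        · intro j hj
          simp only [Finset.mem_singleton] at hj
          simp [zero_pow hj]
      have hB : (∏' j : ℕ, (1 - (0:ℂ) * z⁻¹ * (0:ℂ) ^ j)) = 1 := by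
        have h : ∀ j : ℕ, (1 - (0:ℂ) * z⁻¹ * (0:ℂ) ^ j) = 1 := fun j => by ring
        rw [tprod_congr h, tprod_one]
      have hC : (∏' j : ℕ, (1 - (0:ℂ) ^ (j + 1))) = 1 := by
        have h : ∀ j : ℕ, (1 - (0:ℂ) ^ (j+1)) = 1 := fun j => by
          rw [zero_pow (Nat.succ_ne_zero j), sub_zero]
        rw [tprod_congr h, tprod_one]
      have hR : (∑' n : ℤ, (-1) ^ n * (0:ℂ) ^ (n * (n - 1) / 2) * z ^ n) = 1 - z := by
        rw [tsum_eq_sum (s := ({0, 1} : Finset ℤ)) ?_]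
        · rw [Finset.sum_insert (by norm_num), Finset.sum_singleton]
          norm_num [sub_eq_add_neg]
        · intro n hn
          simp only [Finset.mem_insert, Finset.mem_singleton, not_or] at hn
          have h2 : 2 ≤ n * (n - 1) := by
            have hcase : n ≤ -1 ∨ 2 ≤ n := by omega
            rcases hcase with h | h
            · nlinarith
            · nlinarith
          have he : n * (n - 1) / 2 ≠ 0 := by omega
          rw [zero_zpow _ he, mul_zero, zero_mul]
      rw [hA, hB, hC, hR]; ring
    · exact QGammaJTP.main2 hq' hq0 hz
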